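/- Let T be an hv-convex polyomino in the m×n grid with every row nonempty and some cell in column 1 and some cell in column n. Then for each row i there exist t_i ∈ {1,…,n} and r_i ≥ 1 such that (i,j) ∈ T iff t_i ≤ j < t_i + r_i; moreover if k is a row with (k,1),(k,n) ∈ T then for all i < k: t_{i+1} ≤ t_i ≤ t_{i+1} + r_{i+1} − r_i, and for all i > k: t_{i-1} ≤ t_i ≤ t_{i-1} + r_{i-1} − r_i. -/

import Mathlib

/-- The m×n grid of cells (i,j), 1 ≤ i ≤ m, 1 ≤ j ≤ n. -/
def grid (m n : ℕ) : Finset (ℕ × ℕ) := Finset.Icc 1 m ×ˢ Finset.Icc 1 n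

/-- Number of cells of T in row i (columns 1..n). -/
def rowsum (n : ℕ) (T : Finset (ℕ × ℕ)) (i : ℕ) : ℕ :=
  ((Finset.Icc 1 n).filter (fun j => (i, j) ∈ T)).card

/-- Number of cells of T in column j (rows 1..m). -/
def colsum (m : ℕ) (T : Finset (ℕ × ℕ)) (j : ℕ) : ℕ :=
  ((Finset.Icc 1 m).filter (fun i => (i, j) ∈ T)).card

/-- Horizontally convex: cells in each row are consecutive. -/
def HConvex (T : Finset (ℕ × ℕ)) : Prop :=
  ∀ i k l j, (i, k) ∈ T → (i, l) ∈ T → k ≤ j → j ≤ l → (i, j) ∈ T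

/-- Vertically convex: cells in each column are consecutive. -/
def VConvex (T : Finset (ℕ × ℕ)) : Prop :=
  ∀ j k l i, (k, j) ∈ T → (l, j) ∈ T → k ≤ i → i ≤ l → (i, j) ∈ T

/-- 4-adjacency of distinct cells: |i-i'| + |j-j'| ≤ 1. -/
def Adj (a b : ℕ × ℕ) : Prop :=
  (a.1 = b.1 ∧ (a.2 = b.2 + 1 ∨ b.2 = a.2 + 1)) ∨
  (a.2 = b.2 ∧ (a.1 = b.1 + 1 ∨ b.1 = a.1 + 1))

/-- T is connected under 4-adjacency. -/
def ConnectedIn (T : Finset (ℕ × ℕ)) : Prop :=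
  ∀ a ∈ T, ∀ b ∈ T,
    Relation.ReflTransGen (fun x y => x ∈ T ∧ y ∈ T ∧ Adj x y) a b

/-- A polyomino is a nonempty 4-connected set of cells. -/
def Polyomino (T : Finset (ℕ × ℕ)) : Prop := T.Nonempty ∧ ConnectedIn T

/-- An hv-convex polyomino in the m×n grid. -/
def HvConvexPolyomino (m n : ℕ) (T : Finset (ℕ × ℕ)) : Prop :=
  T ⊆ grid m n ∧ HConvex T ∧ VConvex T ∧ Polyomino T

/-- Upper-left corner region: closed under moving up and left within the grid. -/
def ULCorner (m n : ℕ) (A : Finset (ℕ × ℕ)) : Prop :=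
  A ⊆ grid m n ∧
  ∀ i j, (i, j) ∈ A → (2 ≤ i → (i - 1, j) ∈ A) ∧ (2 ≤ j → (i, j - 1) ∈ A)

/-- Upper-right corner region: closed under moving up and right within the grid. -/
def URCorner (m n : ℕ) (B : Finset (ℕ × ℕ)) : Prop :=
  B ⊆ grid m n ∧
  ∀ i j, (i, j) ∈ B → (2 ≤ i → (i - 1, j) ∈ B) ∧ (j + 1 ≤ n → (i, j + 1) ∈ B)

/-- Lower-left corner region: closed under moving down and left within the grid. -/
def LLCorner (m n : ℕ) (C : Finset (ℕ × ℕ)) : Prop :=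
  C ⊆ grid m n ∧
  ∀ i j, (i, j) ∈ C → (i + 1 ≤ m → (i + 1, j) ∈ C) ∧ (2 ≤ j → (i, j - 1) ∈ C)

/-- Lower-right corner region: closed under moving down and right within the grid. -/
def LRCorner (m n : ℕ) (D : Finset (ℕ × ℕ)) : Prop :=
  D ⊆ grid m n ∧
  ∀ i j, (i, j) ∈ D → (i + 1 ≤ m → (i + 1, j) ∈ D) ∧ (j + 1 ≤ n → (i, j + 1) ∈ D)

/-- The complement of T in the grid decomposes as four pairwise disjoint corner
regions A, B, C, D satisfying the two diagonal conditions: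
(i) (i-1,j-1) ∈ A → (i,j) ∉ D, stated as (i,j) ∈ A → (i+1,j+1) ∉ D, and
(ii) (i-1,j+1) ∈ B → (i,j) ∉ C, stated as (i,j+1) ∈ B → (i+1,j) ∉ C. -/
def CornerDecomp (m n : ℕ) (T A B C D : Finset (ℕ × ℕ)) : Prop :=
  ULCorner m n A ∧ URCorner m n B ∧ LLCorner m n C ∧ LRCorner m n D ∧
  Disjoint A B ∧ Disjoint A C ∧ Disjoint A D ∧
  Disjoint B C ∧ Disjoint B D ∧ Disjoint C D ∧
  grid m n \ T = A ∪ B ∪ C ∪ D ∧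
  (∀ i j, (i, j) ∈ A → (i + 1, j + 1) ∉ D) ∧
  (∀ i j, (i, j + 1) ∈ B → (i + 1, j) ∉ C)

/-- interval representation of an hv-convex polyomino with nonempty
rows, touching columns 1 and n, and the vertical-convexity inequalities relative
to any row k anchored at both sides. -/
theorem stmt5 (m n : ℕ) (T : Finset (ℕ × ℕ))
    (hT : HvConvexPolyomino m n T)
    (hrows : ∀ i ∈ Finset.Icc 1 m, ∃ j, (i, j) ∈ T)
    (hc1 : ∃ i, (i, 1) ∈ T) (hcn : ∃ i, (i, n) ∈ T) :
    ∃ t r : ℕ → ℕ,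
      (∀ i ∈ Finset.Icc 1 m, 1 ≤ t i ∧ t i ≤ n ∧ 1 ≤ r i ∧
        ∀ j, ((i, j) ∈ T ↔ t i ≤ j ∧ j < t i + r i)) ∧
      ∀ k, (k, 1) ∈ T → (k, n) ∈ T →
        (∀ i, 1 ≤ i → i < k → t (i + 1) ≤ t i ∧ t i + r i ≤ t (i + 1) + r (i + 1)) ∧
        (∀ i, k < i → i ≤ m → t (i - 1) ≤ t i ∧ t i + r i ≤ t (i - 1) + r (i - 1)) := by
 
  obtain ⟨hsub, hH, hV, hpoly⟩ := hT
  have hgrid : ∀ i j, (i, j) ∈ T → 1 ≤ i ∧ i ≤ m ∧ 1 ≤ j ∧ j ≤ n := by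
    intro i j hij
    have := hsub hij
    simp [grid, Finset.mem_product, Finset.mem_Icc] at this
    omega
  set t : ℕ → ℕ := fun i => sInf {j | (i, j) ∈ T} with ht
  set u : ℕ → ℕ := fun i => sSup {j | (i, j) ∈ T} with hu
  have hbdd : ∀ i, BddAbove {j | (i, j) ∈ T} :=
    fun i => ⟨n, fun j hj => (hgrid i j hj).2.2.2⟩
  have key : ∀ i, (∃ j, (i, j) ∈ T) →
      (i, t i) ∈ T ∧ (i, u i) ∈ T ∧ t i ≤ u i ∧
      ∀ j, ((i, j) ∈ T ↔ t i ≤ j ∧ j ≤ u i) := by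
    intro i hne
    have hne' : {j | (i, j) ∈ T}.Nonempty := hne
    have h1 : (i, t i) ∈ T := Nat.sInf_mem hne'
    have h2 : (i, u i) ∈ T := Nat.sSup_mem hne' (hbdd i)
    have h3 : t i ≤ u i := Nat.sInf_le h2
    refine ⟨h1, h2, h3, fun j => ⟨fun hj => ⟨Nat.sInf_le hj, le_csSup (hbdd i) hj⟩,
      fun ⟨ha, hb⟩ => hH i (t i) (u i) j h1 h2 ha hb⟩⟩
  refine ⟨t, fun i => u i + 1 - t i, ?_, ?_⟩
  · intro i hi
    obtain ⟨hti, hui, htu, hiff⟩ := key i (hrows i hi)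
    have h1 := hgrid _ _ hti
    refine ⟨h1.2.2.1, h1.2.2.2, by beta_reduce; omega, fun j => ?_⟩
    rw [hiff j]; beta_reduce; omega
  · intro k hk1 hkn
    have hk := hgrid _ _ hk1
    have hrowk : ∀ j, 1 ≤ j → j ≤ n → (k, j) ∈ T := fun j ha hb => hH k 1 n j hk1 hkn ha hb
    have hmem : ∀ i, 1 ≤ i → i ≤ m → (∃ j, (i, j) ∈ T) := fun i ha hb =>
      hrows i (Finset.mem_Icc.mpr ⟨ha, hb⟩)
    constructor
    · intro i h1 h2
      obtain ⟨hti, hui, htu, hiff⟩ := key i (hmem i h1 (by omega))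
      obtain ⟨hti', hui', htu', hiff'⟩ := key (i + 1) (hmem (i + 1) (by omega) (by omega))
      have hgi := hgrid _ _ hti
      have hgu := hgrid _ _ hui
      have hA : (i + 1, t i) ∈ T :=
        hV (t i) i k (i + 1) hti (hrowk _ hgi.2.2.1 hgi.2.2.2) (by omega) (by omega)
      have hB : (i + 1, u i) ∈ T :=
        hV (u i) i k (i + 1) hui (hrowk _ hgu.2.2.1 hgu.2.2.2) (by omega) (by omega)
      have h3 := (hiff' (t i)).mp hA
      have h4 := (hiff' (u i)).mp hB
      beta_reduce
      omega
    · intro i h1 h2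
      obtain ⟨hti, hui, htu, hiff⟩ := key i (hmem i (by omega) h2)
      obtain ⟨hti', hui', htu', hiff'⟩ := key (i - 1) (hmem (i - 1) (by omega) (by omega))
      have hgi := hgrid _ _ hti
      have hgu := hgrid _ _ hui
      have hA : (i - 1, t i) ∈ T :=
        hV (t i) k i (i - 1) (hrowk _ hgi.2.2.1 hgi.2.2.2) hti (by omega) (by omega)
      have hB : (i - 1, u i) ∈ T :=
        hV (u i) k i (i - 1) (hrowk _ hgu.2.2.1 hgu.2.2.2) hui (by omega) (by omega)
      have h3 := (hiff' (t i)).mp hA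
      have h4 := (hiff' (u i)).mp hB
      beta_reduce
      omega
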